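/- Let m ≥ 2 be an integer and φ = (m + 2 + √(m² + 4m))/2. There exists a constant C > 0 depending only on m such that for every finite interval I of integers with length λ(I) ≥ 2, every real K ≥ 1, and every real a, one has ∑_{h∈I} min(K, ‖a + hφ‖^{−2}) ≤ C (√K · λ(I) + K · ln λ(I)). -/

import Mathlib

noncomputable section

/-- `‖x‖`: the distance from `x` to the nearest integer. -/
def intDist (x : ℝ) : ℝ := |x - round x|

/-- `φ = (m + 2 + √(m² + 4m))/2`. -/
def phi (m : ℕ) : ℝ := (m + 2 + Real.sqrt (m ^ 2 + 4 * m)) / 2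

lemma intDist_le_abs_sub_int (x : ℝ) (n : ℤ) : intDist x ≤ |x - n| := by
  rcases eq_or_ne (round x) n with h | h
  · unfold intDist; rw [h]
  · have h1 : |x - round x| ≤ 1 / 2 := abs_sub_round x
    have h2 : (1 : ℝ) ≤ |(round x : ℝ) - n| := by
      rw [← Int.cast_sub, ← Int.cast_abs]
      exact_mod_cast Int.one_le_abs (sub_ne_zero.2 h)
    have h3 : |(round x : ℝ) - n| ≤ |(round x : ℝ) - x| + |x - n| := abs_sub_le _ _ _
    have h4 : |(round x : ℝ) - x| = |x - round x| := abs_sub_comm _ _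
    unfold intDist
    linarith

lemma liouville_phi (m : ℕ) (hm : 2 ≤ m) (q : ℤ) (hq : q ≠ 0) :
    1 / (((m : ℝ) + 3) * |(q : ℝ)|) ≤ intDist (q * phi m) := by
  set s : ℝ := Real.sqrt ((m : ℝ) ^ 2 + 4 * m) with hs_def
  have hs0 : 0 ≤ s := Real.sqrt_nonneg _
  have hs : s ^ 2 = (m : ℝ) ^ 2 + 4 * m := Real.sq_sqrt (by positivity)
  have hm2 : (2 : ℝ) ≤ (m : ℝ) := by exact_mod_cast hm
  have hsirr : Irrational s := by
    apply irrational_nrt_of_notint_nrt 2 ((m : ℤ) ^ 2 + 4 * m)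
      (by push_cast; rw [hs]) _ two_pos
    rintro ⟨y, hy⟩
    have hy0 : (0 : ℤ) ≤ y := by
      have : (0 : ℝ) ≤ (y : ℝ) := hy ▸ hs0
      exact_mod_cast this
    have hy2 : y ^ 2 = (m : ℤ) ^ 2 + 4 * m := by
      have : ((y : ℝ)) ^ 2 = (m : ℝ) ^ 2 + 4 * m := by rw [← hy]; exact hs
      exact_mod_cast this
    have hmz : (2 : ℤ) ≤ (m : ℤ) := by exact_mod_cast hm
    have h1 : (m : ℤ) + 1 < y := by nlinarith
    have h2 : y < (m : ℤ) + 2 := by nlinarith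
    omega
  set p : ℤ := round ((q : ℝ) * phi m) with hp_def
  have hqs : ∀ n : ℤ, (q : ℝ) * s ≠ (n : ℝ) := fun n => (hsirr.intCast_mul hq).ne_int n
  have hphi : phi m = ((m : ℝ) + 2 + s) / 2 := rfl
  set φ' : ℝ := ((m : ℝ) + 2 - s) / 2 with hφ'
  have hfac : ((p : ℝ) - q * phi m) * ((p : ℝ) - q * φ') =
      ((p ^ 2 - ((m : ℤ) + 2) * p * q + q ^ 2 : ℤ) : ℝ) := by
    push_cast
    rw [hphi, hφ']
    linear_combination (-(q : ℝ) ^ 2 / 4) * hs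
  have hEne : (p ^ 2 - ((m : ℤ) + 2) * p * q + q ^ 2 : ℤ) ≠ 0 := by
    intro hE0
    have hz : ((p : ℝ) - q * phi m) * ((p : ℝ) - q * φ') = 0 := by
      rw [hfac, hE0]; simp
    rcases mul_eq_zero.1 hz with h | h
    · have hpe : (p : ℝ) = q * phi m := by linarith [sub_eq_zero.1 h]
      apply hqs (2 * p - ((m : ℤ) + 2) * q)
      rw [hphi] at hpe
      push_cast
      linear_combination (-2 : ℝ) * hpe
    · have hpe : (p : ℝ) = q * φ' := by linarith [sub_eq_zero.1 h]
      apply hqs (((m : ℤ) + 2) * q - 2 * p)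
      rw [hφ'] at hpe
      push_cast
      linear_combination (2 : ℝ) * hpe
  have habs : (1 : ℝ) ≤ |((p ^ 2 - ((m : ℤ) + 2) * p * q + q ^ 2 : ℤ) : ℝ)| := by
    rw [← Int.cast_abs]
    exact_mod_cast Int.one_le_abs hEne
  have hq1 : (1 : ℝ) ≤ |(q : ℝ)| := by
    rw [← Int.cast_abs]
    exact_mod_cast Int.one_le_abs hq
  have hd : intDist ((q : ℝ) * phi m) = |(p : ℝ) - q * phi m| := by
    unfold intDist
    rw [← hp_def, abs_sub_comm]
  have hsle : s ≤ (m : ℝ) + 2 := by nlinarith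
  have hle : |(p : ℝ) - q * φ'| ≤ ((m : ℝ) + 3) * |(q : ℝ)| := by
    have h1 : |(p : ℝ) - q * phi m| ≤ 1 / 2 := by
      rw [abs_sub_comm, hp_def]
      exact abs_sub_round _
    have h2 : |(q : ℝ) * phi m - q * φ'| = |(q : ℝ)| * s := by
      rw [show (q : ℝ) * phi m - q * φ' = q * s by rw [hphi, hφ']; ring, abs_mul,
        abs_of_nonneg hs0]
    have h3 : |(p : ℝ) - q * φ'| ≤ |(p : ℝ) - q * phi m| + |(q : ℝ) * phi m - q * φ'| :=
      abs_sub_le _ _ _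
    rw [h2] at h3
    nlinarith [abs_nonneg (q : ℝ)]
  have hprodge : 1 ≤ |(p : ℝ) - q * phi m| * |(p : ℝ) - q * φ'| := by
    rw [← abs_mul, hfac]; exact habs
  rw [hd, div_le_iff₀ (by positivity)]
  calc (1 : ℝ) ≤ |(p : ℝ) - q * phi m| * |(p : ℝ) - q * φ'| := hprodge
    _ ≤ |(p : ℝ) - q * phi m| * (((m : ℝ) + 3) * |(q : ℝ)|) :=
        mul_le_mul_of_nonneg_left hle (abs_nonneg _)

lemma tail_sum_aux (j0 : ℕ) (h1 : 1 ≤ j0) :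
    ∀ n : ℕ, j0 ≤ n → ∑ j ∈ Finset.Ioc j0 n, (1 : ℝ) / (j : ℝ) ^ 2 ≤ 1 / (j0 : ℝ) - 1 / (n : ℝ) := by
  intro n
  induction n with
  | zero => intro h; exact absurd h (by omega)
  | succ n ih =>
    intro h
    rcases eq_or_lt_of_le h with heq | hlt
    · rw [← heq]
      simp
    · have hn : j0 ≤ n := by omega
      rw [Finset.sum_Ioc_succ_top hn]
      have hih := ih hn
      have hn0 : (0 : ℝ) < (n : ℝ) := by exact_mod_cast (by omega : 0 < n)
      have key : (1 : ℝ) / ((n : ℝ) + 1) ^ 2 ≤ 1 / (n : ℝ) - 1 / ((n : ℝ) + 1) := by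
        have he : (1 : ℝ) / (n : ℝ) - 1 / ((n : ℝ) + 1) = 1 / ((n : ℝ) * ((n : ℝ) + 1)) := by
          field_simp
          ring
        rw [he]
        apply one_div_le_one_div_of_le (by positivity)
        nlinarith
      push_cast
      linarith

lemma tail_sum (j0 : ℕ) (h1 : 1 ≤ j0) (n : ℕ) :
    ∑ j ∈ Finset.Ioc j0 n, (1 : ℝ) / (j : ℝ) ^ 2 ≤ 1 / (j0 : ℝ) := by
  rcases le_or_gt j0 n with h | h
  · have := tail_sum_aux j0 h1 n h
    have hn0 : (0 : ℝ) < (n : ℝ) := by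
      have : 0 < n := by omega
      exact_mod_cast this
    have : (0:ℝ) ≤ 1 / (n : ℝ) := by positivity
    linarith [tail_sum_aux j0 h1 n h]
  · rw [Finset.Ioc_eq_empty (by omega)]
    simp only [Finset.sum_empty]
    positivity

set_option maxHeartbeats 1000000 in
/-- Discrepancy-type estimate: for `m ≥ 2` and `φ = (m+2+√(m²+4m))/2` there is
`C > 0` (depending only on `m`) such that for every finite integer interval
`I = [A, B] ∩ ℤ` with `λ(I) ≥ 2`, every `K ≥ 1` and every `a ∈ ℝ`,
`∑_{h ∈ I} min(K, ‖a + hφ‖⁻²) ≤ C(√K λ(I) + K ln λ(I))`. -/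
theorem discrepancy_estimate (m : ℕ) (hm : 2 ≤ m) :
    ∃ C > (0 : ℝ), ∀ A B : ℤ, (2 : ℝ) ≤ ((Finset.Icc A B).card : ℝ) →
      ∀ K : ℝ, 1 ≤ K → ∀ a : ℝ,
        ∑ h ∈ Finset.Icc A B, min K (1 / intDist (a + h * phi m) ^ 2) ≤
          C * (Real.sqrt K * ((Finset.Icc A B).card : ℝ) +
            K * Real.log ((Finset.Icc A B).card : ℝ)) := by
  refine ⟨8 * ((m : ℝ) + 3) + 6, by positivity, ?_⟩
  intro A B hN K hK a
  set I := Finset.Icc A B with hI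
  set N : ℝ := (I.card : ℝ) with hNdef
  have hN2 : (2 : ℝ) ≤ N := hN
  have hN0 : (0 : ℝ) < N := by linarith
  have hK0 : (0 : ℝ) < K := by linarith
  have hsKpos : (0 : ℝ) < Real.sqrt K := Real.sqrt_pos.2 hK0
  have hsK : Real.sqrt K * Real.sqrt K = K := Real.mul_self_sqrt hK0.le
  have hm3 : (0 : ℝ) < (m : ℝ) + 3 := by positivity
  set δ : ℝ := 1 / (((m : ℝ) + 3) * N) with hδ
  have hδ0 : 0 < δ := by
    rw [hδ]
    exact div_pos one_pos (mul_pos hm3 hN0)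
  have hδinv : 1 / δ = ((m : ℝ) + 3) * N := by
    rw [hδ, one_div_one_div]
  -- interval facts
  have hAB : A ≤ B := by
    by_contra hAB
    push_neg at hAB
    rw [hI, Finset.Icc_eq_empty (not_le.2 hAB)] at hNdef
    rw [hNdef] at hN2
    norm_num at hN2
  have hNcast : ((B + 1 - A : ℤ) : ℝ) = N := by
    rw [hNdef, hI, Int.card_Icc]
    exact_mod_cast (Int.toNat_of_nonneg (by omega : (0 : ℤ) ≤ B + 1 - A)).symm
  -- separation of fractional parts
  have hsep : ∀ h ∈ I, ∀ h' ∈ I, h ≠ h' →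
      δ ≤ |(a + h * phi m - round (a + h * phi m)) -
            (a + h' * phi m - round (a + h' * phi m))| := by
    intro h hh h' hh' hne
    have hq : h - h' ≠ 0 := sub_ne_zero.2 hne
    have hmem := Finset.mem_Icc.1 hh
    have hmem' := Finset.mem_Icc.1 hh'
    have habs_le : |((h - h' : ℤ) : ℝ)| ≤ N := by
      have h1 : |h - h'| ≤ B - A := by
        rw [abs_le]; omega
      have h2 : ((|h - h'| : ℤ) : ℝ) ≤ ((B - A : ℤ) : ℝ) := by exact_mod_cast h1
      have h3 : ((B - A : ℤ) : ℝ) ≤ N := by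
        rw [← hNcast]; push_cast; linarith
      calc |((h - h' : ℤ) : ℝ)| = ((|h - h'| : ℤ) : ℝ) := by rw [Int.cast_abs]
        _ ≤ N := le_trans h2 h3
    have hL := liouville_phi m hm (h - h') hq
    have habs_pos : (0 : ℝ) < |((h - h' : ℤ) : ℝ)| := by
      rw [abs_pos, Int.cast_ne_zero]; exact hq
    have hkey : δ ≤ 1 / (((m : ℝ) + 3) * |((h - h' : ℤ) : ℝ)|) := by
      rw [hδ]
      exact one_div_le_one_div_of_le (mul_pos hm3 habs_pos)
        (mul_le_mul_of_nonneg_left habs_le hm3.le)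
    have hd : intDist (((h - h' : ℤ) : ℝ) * phi m) ≤
        |(a + h * phi m - round (a + h * phi m)) -
          (a + h' * phi m - round (a + h' * phi m))| := by
      have heq : (a + h * phi m - round (a + h * phi m)) -
            (a + h' * phi m - round (a + h' * phi m)) =
          ((h - h' : ℤ) : ℝ) * phi m -
            ((round (a + h * phi m) - round (a + h' * phi m) : ℤ) : ℝ) := by
        push_cast
        ring
      rw [heq]
      exact intDist_le_abs_sub_int _ _
    exact le_trans (le_trans hkey hL) hd
  -- the key (binning) map
  set key : ℤ → ℕ × Bool := fun h =>
    (⌊2 * intDist (a + h * phi m) / δ⌋₊,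
      decide ((0 : ℝ) ≤ a + h * phi m - round (a + h * phi m))) with hkeydef
  have htabs : ∀ h : ℤ, intDist (a + h * phi m) =
      |a + h * phi m - round (a + h * phi m)| := fun h => rfl
  have ht0 : ∀ h : ℤ, 0 ≤ intDist (a + h * phi m) := fun h => abs_nonneg _
  have hthalf : ∀ h : ℤ, intDist (a + h * phi m) ≤ 1 / 2 := fun h => abs_sub_round _
  -- floor bounds
  have hfb : ∀ h : ℤ, ((key h).1 : ℝ) * (δ / 2) ≤ intDist (a + h * phi m) ∧
      intDist (a + h * phi m) < (((key h).1 : ℝ) + 1) * (δ / 2) := by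
    intro h
    have h0 : 0 ≤ 2 * intDist (a + h * phi m) / δ :=
      div_nonneg (by linarith [ht0 h]) hδ0.le
    constructor
    · have h1 := Nat.floor_le h0
      rw [le_div_iff₀ hδ0] at h1
      simp only [hkeydef]
      linarith
    · have h1 := Nat.lt_floor_add_one (2 * intDist (a + h * phi m) / δ)
      rw [div_lt_iff₀ hδ0] at h1
      simp only [hkeydef]
      linarith
  -- injectivity
  have hinj : ∀ h ∈ I, ∀ h' ∈ I, key h = key h' → h = h' := by
    intro h hh h' hh' hkk
    by_contra hne
    have hsep' := hsep h hh h' hh' hne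
    have hfl : (key h).1 = (key h').1 := congrArg Prod.fst hkk
    have hsgn : ((0 : ℝ) ≤ a + h * phi m - round (a + h * phi m)) ↔
        ((0 : ℝ) ≤ a + h' * phi m - round (a + h' * phi m)) := by
      have h2 := congrArg Prod.snd hkk
      simp only [hkeydef, decide_eq_decide] at h2
      exact h2
    have h1 := hfb h
    have h2 := hfb h'
    rw [hfl] at h1
    have e1 := h1.1
    have e2 := h1.2
    have e3 := h2.1
    have e4 := h2.2
    have htt : |intDist (a + h * phi m) - intDist (a + h' * phi m)| < δ / 2 := by
      rw [abs_lt]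
      constructor
      · linarith only [e1, e4]
      · linarith only [e2, e3]
    have hrr : |(a + h * phi m - round (a + h * phi m)) -
        (a + h' * phi m - round (a + h' * phi m))| < δ / 2 := by
      by_cases hs1 : (0 : ℝ) ≤ a + h * phi m - round (a + h * phi m)
      · have hs2 := hsgn.1 hs1
        rw [htabs, htabs, abs_of_nonneg hs1, abs_of_nonneg hs2] at htt
        exact htt
      · have hs2 : ¬ ((0 : ℝ) ≤ a + h' * phi m - round (a + h' * phi m)) :=
          fun c => hs1 (hsgn.2 c)
        rw [htabs, htabs, abs_of_neg (lt_of_not_ge hs1), abs_of_neg (lt_of_not_ge hs2)] at htt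
        rw [show -(a + h * phi m - round (a + h * phi m)) -
            -(a + h' * phi m - round (a + h' * phi m)) =
            -((a + h * phi m - round (a + h * phi m)) -
              (a + h' * phi m - round (a + h' * phi m))) by ring, abs_neg] at htt
        exact htt
    linarith
  -- the bin weight function
  set g : ℕ × Bool → ℝ := fun k =>
    if k.1 = 0 then K else min K (4 / ((k.1 : ℝ) ^ 2 * δ ^ 2)) with hg
  have hg0 : ∀ k, 0 ≤ g k := by
    intro k
    simp only [hg]
    split
    · linarith
    · exact le_min (by linarith)
        (div_nonneg (by norm_num) (mul_nonneg (pow_nonneg (Nat.cast_nonneg _) 2)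
          (pow_nonneg hδ0.le 2)))
  -- step 1 : pointwise bound
  have step1 : ∑ h ∈ I, min K (1 / intDist (a + h * phi m) ^ 2) ≤ ∑ h ∈ I, g (key h) := by
    apply Finset.sum_le_sum
    intro h hh
    simp only [hg]
    split
    · exact min_le_left _ _
    · rename_i hj
      apply min_le_min le_rfl
      have hj1 : 1 ≤ (key h).1 := Nat.one_le_iff_ne_zero.2 hj
      have hj1' : (1 : ℝ) ≤ ((key h).1 : ℝ) := by exact_mod_cast hj1
      have hlow := (hfb h).1
      have hδ2 : (0 : ℝ) < δ / 2 := by linarith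
      have hjd : δ / 2 ≤ ((key h).1 : ℝ) * (δ / 2) := le_mul_of_one_le_left hδ2.le hj1'
      have htpos : 0 < intDist (a + h * phi m) := lt_of_lt_of_le hδ2 (hjd.trans hlow)
      have hsq : (((key h).1 : ℝ) * (δ / 2)) ^ 2 ≤ intDist (a + h * phi m) ^ 2 :=
        pow_le_pow_left₀ (by linarith) hlow 2
      rw [div_le_div_iff₀ (pow_pos htpos 2)
        (mul_pos (pow_pos (by linarith : (0:ℝ) < ((key h).1 : ℝ)) 2) (pow_pos hδ0 2))]
      nlinarith [hsq]
  -- step 2 : injectivity transfer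
  have step2 : ∑ h ∈ I, g (key h) = ∑ k ∈ I.image key, g k :=
    (Finset.sum_image hinj).symm
  -- step 3 : contain the image in a box
  set J : ℕ := ⌊1 / δ⌋₊ with hJ
  have hsub : I.image key ⊆ Finset.range (J + 1) ×ˢ (Finset.univ : Finset Bool) := by
    intro k hk
    simp only [Finset.mem_image] at hk
    obtain ⟨h, hh, rfl⟩ := hk
    simp only [Finset.mem_product, Finset.mem_range, Finset.mem_univ, and_true]
    have hle1 : 2 * intDist (a + h * phi m) / δ ≤ 1 / δ :=
      (div_le_div_iff_of_pos_right hδ0).2 (by linarith [hthalf h])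
    exact Nat.lt_succ_of_le (Nat.floor_mono hle1)
  have step3 : ∑ k ∈ I.image key, g k ≤
      ∑ k ∈ Finset.range (J + 1) ×ˢ (Finset.univ : Finset Bool), g k :=
    Finset.sum_le_sum_of_subset_of_nonneg hsub (fun k _ _ => hg0 k)
  -- step 4 : collapse the Bool factor
  have step4 : ∑ k ∈ Finset.range (J + 1) ×ˢ (Finset.univ : Finset Bool), g k =
      2 * ∑ j ∈ Finset.range (J + 1),
        (if j = 0 then K else min K (4 / ((j : ℝ) ^ 2 * δ ^ 2))) := by
    rw [Finset.sum_product, Finset.mul_sum]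
    apply Finset.sum_congr rfl
    intro j _
    rw [Fintype.sum_bool]
    exact (two_mul _).symm
  -- step 5 : split off j = 0
  have hins : Finset.range (J + 1) = insert 0 (Finset.Ioc 0 J) := by
    ext j
    simp only [Finset.mem_range, Finset.mem_insert, Finset.mem_Ioc]
    omega
  have step5 : ∑ j ∈ Finset.range (J + 1),
      (if j = 0 then K else min K (4 / ((j : ℝ) ^ 2 * δ ^ 2))) =
      K + ∑ j ∈ Finset.Ioc 0 J, min K (4 / ((j : ℝ) ^ 2 * δ ^ 2)) := by
    rw [hins, Finset.sum_insert (by simp)]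
    simp only [if_pos rfl]
    congr 1
    apply Finset.sum_congr rfl
    intro j hj
    rw [if_neg]
    simp only [Finset.mem_Ioc] at hj
    omega
  -- step 6 : split the sum at j0
  set j0 : ℕ := ⌈2 / (δ * Real.sqrt K)⌉₊ with hj0def
  have hpos : 0 < 2 / (δ * Real.sqrt K) := div_pos (by norm_num) (mul_pos hδ0 hsKpos)
  have hj01 : 1 ≤ j0 := Nat.ceil_pos.2 hpos
  have hj01' : (1 : ℝ) ≤ (j0 : ℝ) := by exact_mod_cast hj01
  have hj0ge : 2 / (δ * Real.sqrt K) ≤ (j0 : ℝ) := Nat.le_ceil _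
  have hj0le : (j0 : ℝ) ≤ 2 / (δ * Real.sqrt K) + 1 := by
    have := Nat.ceil_lt_add_one hpos.le
    linarith
  set J' : ℕ := max J j0 with hJ'
  have hterm0 : ∀ j : ℕ, (0:ℝ) ≤ min K (4 / ((j : ℝ) ^ 2 * δ ^ 2)) :=
    fun j => le_min (by linarith)
      (div_nonneg (by norm_num) (mul_nonneg (pow_nonneg (Nat.cast_nonneg _) 2)
        (pow_nonneg hδ0.le 2)))
  have hIsub : ∑ j ∈ Finset.Ioc 0 J, min K (4 / ((j : ℝ) ^ 2 * δ ^ 2)) ≤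
      ∑ j ∈ Finset.Ioc 0 J', min K (4 / ((j : ℝ) ^ 2 * δ ^ 2)) :=
    Finset.sum_le_sum_of_subset_of_nonneg
      (Finset.Ioc_subset_Ioc le_rfl (le_max_left _ _)) (fun j _ _ => hterm0 j)
  have hsplit : ∑ j ∈ Finset.Ioc 0 J', min K (4 / ((j : ℝ) ^ 2 * δ ^ 2)) =
      ∑ j ∈ Finset.Ioc 0 j0, min K (4 / ((j : ℝ) ^ 2 * δ ^ 2)) +
      ∑ j ∈ Finset.Ioc j0 J', min K (4 / ((j : ℝ) ^ 2 * δ ^ 2)) :=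
    (Finset.sum_Ioc_consecutive _ (Nat.zero_le _) (le_max_right _ _)).symm
  have hfirst : ∑ j ∈ Finset.Ioc 0 j0, min K (4 / ((j : ℝ) ^ 2 * δ ^ 2)) ≤ (j0 : ℝ) * K := by
    calc ∑ j ∈ Finset.Ioc 0 j0, min K (4 / ((j : ℝ) ^ 2 * δ ^ 2)) ≤
        ∑ _j ∈ Finset.Ioc 0 j0, K := Finset.sum_le_sum (fun j _ => min_le_left _ _)
      _ = (j0 : ℝ) * K := by
          rw [Finset.sum_const, Nat.card_Ioc]
          simp [nsmul_eq_mul]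
  have hsecond : ∑ j ∈ Finset.Ioc j0 J', min K (4 / ((j : ℝ) ^ 2 * δ ^ 2)) ≤
      (4 / δ ^ 2) * (1 / (j0 : ℝ)) := by
    calc ∑ j ∈ Finset.Ioc j0 J', min K (4 / ((j : ℝ) ^ 2 * δ ^ 2)) ≤
        ∑ j ∈ Finset.Ioc j0 J', (4 / δ ^ 2) * (1 / (j : ℝ) ^ 2) := by
          apply Finset.sum_le_sum
          intro j hj
          have he : (4 : ℝ) / ((j : ℝ) ^ 2 * δ ^ 2) = (4 / δ ^ 2) * (1 / (j : ℝ) ^ 2) := by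
            ring
          rw [← he]
          exact min_le_right _ _
      _ = (4 / δ ^ 2) * ∑ j ∈ Finset.Ioc j0 J', (1 : ℝ) / (j : ℝ) ^ 2 := by
          rw [Finset.mul_sum]
      _ ≤ (4 / δ ^ 2) * (1 / (j0 : ℝ)) :=
          mul_le_mul_of_nonneg_left (tail_sum j0 hj01 J')
            (div_nonneg (by norm_num) (pow_nonneg hδ0.le 2))
  clear_value I N δ key g J j0 J'
  -- numeric bounds on the two pieces
  have hA : (j0 : ℝ) * K ≤ 2 * Real.sqrt K / δ + K := by
    have h1 : (j0 : ℝ) * K ≤ (2 / (δ * Real.sqrt K) + 1) * K :=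
      mul_le_mul_of_nonneg_right hj0le hK0.le
    have h2 : (2 / (δ * Real.sqrt K)) * K = 2 * Real.sqrt K / δ := by
      rw [div_mul_eq_mul_div, div_eq_div_iff (mul_pos hδ0 hsKpos).ne' hδ0.ne']
      linear_combination (-2 * δ) * hsK
    linarith only [h1, h2, hK0]
  have hB : (4 / δ ^ 2) * (1 / (j0 : ℝ)) ≤ 2 * Real.sqrt K / δ := by
    have hj0pos : (0 : ℝ) < (j0 : ℝ) := by linarith
    have h1 : 1 / (j0 : ℝ) ≤ δ * Real.sqrt K / 2 := by
      rw [div_le_div_iff₀ hj0pos (by norm_num : (0:ℝ) < 2)]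
      have hge := hj0ge
      rw [div_le_iff₀ (mul_pos hδ0 hsKpos)] at hge
      linarith only [hge]
    have h2 : (4 / δ ^ 2) * (δ * Real.sqrt K / 2) = 2 * Real.sqrt K / δ := by
      rw [div_mul_eq_mul_div, div_eq_div_iff (pow_pos hδ0 2).ne' hδ0.ne']
      ring
    calc (4 / δ ^ 2) * (1 / (j0 : ℝ)) ≤ (4 / δ ^ 2) * (δ * Real.sqrt K / 2) :=
        mul_le_mul_of_nonneg_left h1 (div_nonneg (by norm_num) (pow_nonneg hδ0.le 2))
      _ = 2 * Real.sqrt K / δ := h2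
  -- assemble
  have htotal : ∑ h ∈ I, min K (1 / intDist (a + h * phi m) ^ 2) ≤
      4 * K + 8 * Real.sqrt K / δ := by
    have c1 : ∑ h ∈ I, min K (1 / intDist (a + h * phi m) ^ 2) ≤
        2 * (K + ((j0 : ℝ) * K + (4 / δ ^ 2) * (1 / (j0 : ℝ)))) := by
      calc ∑ h ∈ I, min K (1 / intDist (a + h * phi m) ^ 2)
          ≤ ∑ h ∈ I, g (key h) := step1
        _ = ∑ k ∈ I.image key, g k := step2
        _ ≤ ∑ k ∈ Finset.range (J + 1) ×ˢ (Finset.univ : Finset Bool), g k := step3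
        _ = 2 * ∑ j ∈ Finset.range (J + 1),
              (if j = 0 then K else min K (4 / ((j : ℝ) ^ 2 * δ ^ 2))) := step4
        _ = 2 * (K + ∑ j ∈ Finset.Ioc 0 J, min K (4 / ((j : ℝ) ^ 2 * δ ^ 2))) := by
              rw [step5]
        _ ≤ 2 * (K + ((j0 : ℝ) * K + (4 / δ ^ 2) * (1 / (j0 : ℝ)))) := by
              have := hIsub.trans (le_of_eq hsplit) |>.trans (add_le_add hfirst hsecond)
              linarith
    have c2 : 2 * (K + ((j0 : ℝ) * K + (4 / δ ^ 2) * (1 / (j0 : ℝ)))) ≤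
        4 * K + 8 * Real.sqrt K / δ := by
      ring_nf
      ring_nf at hA hB
      linarith
    exact c1.trans c2
  have hfinal : 8 * Real.sqrt K / δ = 8 * (((m : ℝ) + 3) * (Real.sqrt K * N)) := by
    rw [hδ, div_div_eq_mul_div]
    ring
  -- compare with the target
  have hlogN : Real.log 2 ≤ Real.log N := Real.log_le_log (by norm_num) hN2
  have hlog2 : (0.6931471803 : ℝ) < Real.log 2 := Real.log_two_gt_d9
  have hlogN' : (0.6931471803 : ℝ) ≤ Real.log N := by linarith
  have h4K : 4 * K ≤ 6 * (K * Real.log N) := by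
    have hmm := mul_le_mul_of_nonneg_left hlogN' hK0.le
    linarith only [hmm, hK0]
  have hsqKN : 0 ≤ Real.sqrt K * N := mul_nonneg (Real.sqrt_nonneg K) hN0.le
  calc ∑ h ∈ I, min K (1 / intDist (a + h * phi m) ^ 2)
      ≤ 4 * K + 8 * Real.sqrt K / δ := htotal
    _ = 4 * K + 8 * (((m : ℝ) + 3) * (Real.sqrt K * N)) := by rw [hfinal]
    _ ≤ (8 * ((m : ℝ) + 3) + 6) * (Real.sqrt K * N + K * Real.log N) := by
        have hKlog : 0 ≤ K * Real.log N := mul_nonneg hK0.le (by linarith)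
        have hmK : (0:ℝ) ≤ (m : ℝ) := Nat.cast_nonneg m
        have hmKlog : (0:ℝ) ≤ (m : ℝ) * (K * Real.log N) := mul_nonneg hmK hKlog
        nlinarith [h4K, hsqKN, hKlog, hmKlog]
  done

end
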